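/- Let E be a finite-dimensional real inner product space and let 𝒰 and 𝒱 be subspaces of E. Let 𝒵 = (id − P_𝒱)(𝒰) denote the image of 𝒰 under id − P_𝒱. Then P_{𝒰 + 𝒱} − P_𝒱 = P_𝒵 (equivalently, for matrices U, V with the same number of rows and W = [U V] their column concatenation, P_W − P_V = P_Z where Z = (I − P_V)U and P_A denotes the orthogonal projection onto the column space of A). -/

import Mathlib

/-- `projSub S` is the orthogonal projection of `E` onto the subspace `S`,
viewed as a map `E →L[ℝ] E`. -/
noncomputable def projSub {E : Type*} [NormedAddCommGroup E] [InnerProductSpace ℝ E]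
    [FiniteDimensional ℝ E] (S : Submodule ℝ E) : E →L[ℝ] E :=
  S.subtypeL.comp (Submodule.orthogonalProjection S)

lemma projSub_apply {E : Type*} [NormedAddCommGroup E] [InnerProductSpace ℝ E]
    [FiniteDimensional ℝ E] (S : Submodule ℝ E) (x : E) :
    projSub S x = (Submodule.orthogonalProjection S x : E) := rfl

/-- For subspaces `𝒰, 𝒱` of a finite-dimensional real inner product space and
`𝒵 = (id − P_𝒱)(𝒰)`, one has `P_{𝒰 + 𝒱} − P_𝒱 = P_𝒵`. -/
theorem projSub_sup_sub_projSub {E : Type*} [NormedAddCommGroup E]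
    [InnerProductSpace ℝ E] [FiniteDimensional ℝ E] (U V : Submodule ℝ E) :
    projSub (U ⊔ V) - projSub V =
      projSub (Submodule.map ((ContinuousLinearMap.id ℝ E - projSub V : E →L[ℝ] E) : E →ₗ[ℝ] E) U) := by
  set Z := Submodule.map ((ContinuousLinearMap.id ℝ E - projSub V : E →L[ℝ] E) : E →ₗ[ℝ] E) U with hZ
  have hZV : Z ≤ Vᗮ := by
    rintro _ ⟨u, hu, rfl⟩
    simpa [projSub_apply] using Submodule.sub_starProjection_mem_orthogonal (K := V) u
  have hsup : U ⊔ V = Z ⊔ V := by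
    apply le_antisymm
    · apply sup_le _ le_sup_right
      intro u hu
      have : u = ((ContinuousLinearMap.id ℝ E - projSub V) u) +
          (Submodule.orthogonalProjection V u : E) := by
        simp [projSub_apply]
      rw [this]
      exact Submodule.add_mem _ (Submodule.mem_sup_left ⟨u, hu, rfl⟩)
        (Submodule.mem_sup_right (Submodule.orthogonalProjection V u).2)
    · apply sup_le _ le_sup_right
      rintro _ ⟨u, hu, rfl⟩
      have : (ContinuousLinearMap.id ℝ E - projSub V) u =
          u - (Submodule.orthogonalProjection V u : E) := by simp [projSub_apply]
      rw [ContinuousLinearMap.coe_coe, this]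
      exact Submodule.sub_mem _ (Submodule.mem_sup_left hu)
        (Submodule.mem_sup_right (Submodule.orthogonalProjection V u).2)
  rw [hsup]
  ext x
  simp only [ContinuousLinearMap.sub_apply]
  rw [sub_eq_iff_eq_add']
  simp only [projSub_apply]
  apply Submodule.eq_starProjection_of_mem_orthogonal
  · exact Submodule.add_mem _ (Submodule.mem_sup_right (Submodule.orthogonalProjection V x).2)
      (Submodule.mem_sup_left (Submodule.orthogonalProjection Z x).2)
  · rw [← Submodule.inf_orthogonal, Submodule.mem_inf]
    constructor
    · have h1 : x - ((Submodule.orthogonalProjection V x : E) + (Submodule.orthogonalProjection Z x : E)) =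
          (x - (Submodule.orthogonalProjection Z x : E)) - (Submodule.orthogonalProjection V x : E) := by abel
      rw [h1]
      exact Submodule.sub_mem _ (Submodule.sub_starProjection_mem_orthogonal x)
        (Submodule.orthogonal_le hZV (Submodule.le_orthogonal_orthogonal V (Submodule.orthogonalProjection V x).2))
    · have h1 : x - ((Submodule.orthogonalProjection V x : E) + (Submodule.orthogonalProjection Z x : E)) =
          (x - (Submodule.orthogonalProjection V x : E)) - (Submodule.orthogonalProjection Z x : E) := by abel
      rw [h1]
      exact Submodule.sub_mem _ (Submodule.sub_starProjection_mem_orthogonal x)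
        (hZV (Submodule.orthogonalProjection Z x).2)
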